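/- Let q be a prime power, h ≥ 1, and 2 ≤ K ≤ N. For integers n ≥ t ≥ 0, let G(n,t) denote the number of t-dimensional F_{q^h}-subspaces of F_{q^h}^n (the Gaussian binomial coefficient binom(n,t)_{q^h}). If G(N−2, K−2) · Σ_{i=1}^{N} C(N,i) (q^h−1)^i (q^i − q) < G(N,K), where C(N,i) denotes the ordinary binomial coefficient, then there exists a K-dimensional F_{q^h}-linear subspace C of F_{q^h}^N all of whose nonzero codewords are q-outer minimal. -/

import Mathlib

/-- The number of `t`-dimensional subspaces of `F^n` (the Gaussian binomial coefficient when
`F = F_{q^h}`). -/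
noncomputable def gaussianCount (F : Type) [Field F] (n t : ℕ) : ℕ :=
  Nat.card {V : Submodule F (Fin n → F) // Module.finrank F V = t}

set_option synthInstance.maxHeartbeats 400000
set_option maxHeartbeats 1000000
set_option linter.unusedVariables false

open Finset Module

lemma count_pair (F : Type) [Field F] [Fintype F] {N K : ℕ}
    (c c' : Fin N → F) (hli : LinearIndependent F ![c, c']) :
    Nat.card {V : Submodule F (Fin N → F) // c ∈ V ∧ c' ∈ V ∧ Module.finrank F V = K}
      ≤ gaussianCount F (N - 2) (K - 2) := by
  classical
  set W : Submodule F (Fin N → F) := Submodule.span F {c, c'} with hWdef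
  have hrange : Set.range ![c, c'] = {c, c'} := by
    ext x
    simp [Fin.exists_fin_two]; tauto
  have hW2 : Module.finrank F W = 2 := by
    have h := finrank_span_eq_card hli
    rw [hrange] at h
    simpa using h
  have hWle : ∀ (V : Submodule F (Fin N → F)), c ∈ V → c' ∈ V → W ≤ V := by
    intro V hc hc'
    rw [hWdef, Submodule.span_le]
    rintro x (rfl | hx)
    · exact hc
    · simp only [Set.mem_singleton_iff] at hx; subst hx; exact hc'
  have hQ : Module.finrank F ((Fin N → F) ⧸ W) = N - 2 := by
    have h1 := Submodule.finrank_quotient_add_finrank W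
    rw [hW2, Module.finrank_fin_fun] at h1
    omega
  obtain ⟨e⟩ : Nonempty (((Fin N → F) ⧸ W) ≃ₗ[F] (Fin (N - 2) → F)) := by
    apply FiniteDimensional.nonempty_linearEquiv_of_finrank_eq
    rw [hQ, Module.finrank_fin_fun]
  have key : ∀ V : Submodule F (Fin N → F), c ∈ V → c' ∈ V → Module.finrank F V = K →
      Module.finrank F ((V.map W.mkQ).map e.toLinearMap) = K - 2 := by
    intro V hc hc' hVK
    have hWV : W ≤ V := hWle V hc hc'
    have rn := LinearMap.finrank_range_add_finrank_ker (W.mkQ.comp V.subtype)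
    have hr : LinearMap.range (W.mkQ.comp V.subtype) = V.map W.mkQ := by
      rw [LinearMap.range_comp, Submodule.range_subtype]
    have hk : LinearMap.ker (W.mkQ.comp V.subtype) = W.comap V.subtype := by
      rw [LinearMap.ker_comp, Submodule.ker_mkQ]
    have hkrank : Module.finrank F (LinearMap.ker (W.mkQ.comp V.subtype)) = 2 := by
      rw [hk, (Submodule.comapSubtypeEquivOfLe hWV).finrank_eq, hW2]
    rw [hr, hkrank] at rn
    rw [LinearEquiv.finrank_map_eq]
    omega
  haveI : Finite (Submodule F (Fin (N - 2) → F)) :=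
    Finite.of_injective (fun (V : Submodule F (Fin (N-2) → F)) => (V : Set (Fin (N-2) → F)))
      SetLike.coe_injective
  rw [gaussianCount]
  refine Nat.card_le_card_of_injective
    (fun V => ⟨(V.1.map W.mkQ).map e.toLinearMap,
      key V.1 V.2.1 V.2.2.1 V.2.2.2⟩) ?_
  intro V1 V2 hV
  have h1 : ((V1.1.map W.mkQ).map e.toLinearMap)
      = ((V2.1.map W.mkQ).map e.toLinearMap) := congrArg Subtype.val hV
  have h2 : V1.1.map W.mkQ = V2.1.map W.mkQ :=
    Submodule.map_injective_of_injective e.injective h1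
  have recover : ∀ (V : Submodule F (Fin N → F)), c ∈ V → c' ∈ V →
      (V.map W.mkQ).comap W.mkQ = V := by
    intro V hc hc'
    rw [Submodule.comap_map_eq, Submodule.ker_mkQ, sup_eq_left]
    exact hWle V hc hc'
  apply Subtype.ext
  rw [← recover V1.1 V1.2.1 V1.2.2.1, h2, recover V2.1 V2.2.1 V2.2.2.1]
open Finset Module

def TT (Fq F : Type) [Field Fq] [Field F] (N : ℕ) (c : Fin N → F) (lam : Fin N → Fq) : Prop :=
  c ≠ 0 ∧ (∀ i, c i = 0 → lam i = 0) ∧ ¬ ∃ l : Fq, ∀ i, c i ≠ 0 → lam i = l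

lemma badcount (Fq F : Type) [Field Fq] [Field F] [Fintype Fq] [Fintype F] (N : ℕ) :
    Nat.card {p : (Fin N → F) × (Fin N → Fq) // TT Fq F N p.1 p.2}
      ≤ ∑ i ∈ Finset.Icc 1 N,
          N.choose i * (Fintype.card F - 1) ^ i * (Fintype.card Fq ^ i - Fintype.card Fq) := by
  classical
  rw [Nat.card_eq_fintype_card, Fintype.card_subtype]
  set s : Finset ((Fin N → F) × (Fin N → Fq)) :=
    univ.filter (fun p => TT Fq F N p.1 p.2) with hs
  set supp : ((Fin N → F) × (Fin N → Fq)) → Finset (Fin N) :=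
    fun p => univ.filter (fun i => p.1 i ≠ 0) with hsupp
  have hmaps : ∀ p ∈ s, supp p ∈ (univ : Finset (Fin N)).powerset := by
    intro p _; simp [mem_powerset]
  have hfiber : ∀ S ∈ (univ : Finset (Fin N)).powerset,
      ({p ∈ s | supp p = S}).card
        ≤ (Fintype.card F - 1) ^ S.card * (Fintype.card Fq ^ S.card - Fintype.card Fq) := by
    intro S _
    by_cases hS : S.Nonempty
    · -- injection into product
      set t : Finset ((↥S → F) × (↥S → Fq)) :=
        (univ.filter (fun g1 : ↥S → F => ∀ i, g1 i ≠ 0)) ×ˢ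
        (univ.filter (fun g2 : ↥S → Fq => ¬ ∃ l, ∀ i, g2 i = l)) with ht
      have hle : ({p ∈ s | supp p = S}).card ≤ t.card := by
        apply Finset.card_le_card_of_injOn
          (fun p => (fun i : ↥S => p.1 i, fun i : ↥S => p.2 i))
        · intro p hp
          simp only [mem_coe, mem_filter, hs, mem_univ, true_and] at hp
          obtain ⟨⟨hc0, hz, hnc⟩, hsp⟩ := hp
          have hmem : ∀ i : Fin N, i ∈ S ↔ p.1 i ≠ 0 := by
            intro i
            rw [← hsp]; simp [hsupp]
          rw [ht]
          simp only [mem_coe, mem_product, mem_filter, mem_univ, true_and]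
          constructor
          · intro i; exact (hmem i).1 i.2
          · rintro ⟨l, hl⟩
            exact hnc ⟨l, fun i hi => hl ⟨i, (hmem i).2 hi⟩⟩
        · intro p hp p' hp' heq
          simp only [mem_coe, mem_filter, hs, mem_univ, true_and] at hp hp'
          obtain ⟨⟨hc0, hz, hnc⟩, hsp⟩ := hp
          obtain ⟨⟨hc0', hz', hnc'⟩, hsp'⟩ := hp'
          have h1 := congrArg Prod.fst heq
          have h2 := congrArg Prod.snd heq
          have hmem : ∀ i : Fin N, i ∈ S ↔ p.1 i ≠ 0 := by
            intro i; rw [← hsp]; simp [hsupp]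
          have hmem' : ∀ i : Fin N, i ∈ S ↔ p'.1 i ≠ 0 := by
            intro i; rw [← hsp']; simp [hsupp]
          have hceq : p.1 = p'.1 := by
            funext i
            by_cases hi : i ∈ S
            · exact congrFun h1 ⟨i, hi⟩
            · have hA : p.1 i = 0 := by
                by_contra hA; exact hi ((hmem i).2 hA)
              have hB : p'.1 i = 0 := by
                by_contra hB; exact hi ((hmem' i).2 hB)
              rw [hA, hB]
          have hleq : p.2 = p'.2 := by
            funext i
            by_cases hi : i ∈ S
            · exact congrFun h2 ⟨i, hi⟩
            · have hA : p.1 i = 0 := by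
                by_contra hA; exact hi ((hmem i).2 hA)
              rw [hz i hA, hz' i (hceq ▸ hA)]
          exact Prod.ext hceq hleq
      refine hle.trans ?_
      rw [ht, Finset.card_product]
      have hcF : (univ.filter (fun g1 : ↥S → F => ∀ i, g1 i ≠ 0)).card
          = (Fintype.card F - 1) ^ S.card := by
        rw [← Fintype.card_subtype]
        rw [Fintype.card_congr (Equiv.subtypePiEquivPi (p := fun (_ : ↥S) (x : F) => x ≠ 0))]
        rw [Fintype.card_pi]
        have : Fintype.card {x : F // x ≠ 0} = Fintype.card F - 1 := by
          simp [Fintype.card_subtype_compl]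
        simp [this]
      have hcq : (univ.filter (fun g2 : ↥S → Fq => ¬ ∃ l, ∀ i, g2 i = l)).card
          ≤ Fintype.card Fq ^ S.card - Fintype.card Fq := by
        rw [← Fintype.card_subtype]
        rw [Fintype.card_subtype_compl]
        have hfun : Fintype.card (↥S → Fq) = Fintype.card Fq ^ S.card := by
          rw [Fintype.card_fun]
          congr 1
          simp
        rw [hfun]
        apply Nat.sub_le_sub_left
        have : Function.Injective
            (fun l : Fq => (⟨fun _ => l, ⟨l, fun _ => rfl⟩⟩ :
              {g : ↥S → Fq // ∃ l, ∀ i, g i = l})) := by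
          intro l l' hll
          have := congrFun (congrArg Subtype.val hll) ⟨hS.choose, hS.choose_spec⟩
          exact this
        exact Fintype.card_le_of_injective _ this
      calc _ = (univ.filter (fun g1 : ↥S → F => ∀ i, g1 i ≠ 0)).card *
            (univ.filter (fun g2 : ↥S → Fq => ¬ ∃ l, ∀ i, g2 i = l)).card := rfl
        _ ≤ (Fintype.card F - 1) ^ S.card * (Fintype.card Fq ^ S.card - Fintype.card Fq) := by
            rw [hcF]; exact Nat.mul_le_mul_left _ hcq
    · -- S empty : fiber empty
      rw [not_nonempty_iff_eq_empty] at hS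
      subst hS
      convert Nat.zero_le _
      rw [Finset.card_eq_zero, Finset.filter_eq_empty_iff]
      intro p hp
      simp only [hs, mem_filter, mem_univ, true_and] at hp
      obtain ⟨hc0, _, _⟩ := hp
      obtain ⟨i, hi⟩ : ∃ i, p.1 i ≠ 0 := by
        by_contra hcon; push_neg at hcon
        exact hc0 (funext fun i => hcon i)
      intro hSp
      have : i ∈ supp p := by simp [hsupp, hi]
      rw [hSp] at this
      exact absurd this (notMem_empty i)
  calc s.card = ∑ S ∈ (univ : Finset (Fin N)).powerset, ({p ∈ s | supp p = S}).card :=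
        Finset.card_eq_sum_card_fiberwise hmaps
    _ ≤ ∑ S ∈ (univ : Finset (Fin N)).powerset,
          (Fintype.card F - 1) ^ S.card * (Fintype.card Fq ^ S.card - Fintype.card Fq) :=
        Finset.sum_le_sum hfiber
    _ = ∑ j ∈ Finset.range (N + 1), N.choose j •
          ((Fintype.card F - 1) ^ j * (Fintype.card Fq ^ j - Fintype.card Fq)) := by
        rw [Finset.sum_powerset]
        simp only [card_univ, Fintype.card_fin]
        refine Finset.sum_congr rfl (fun j _ => ?_)
        rw [Finset.sum_powersetCard j univ
          (fun m => (Fintype.card F - 1) ^ m * (Fintype.card Fq ^ m - Fintype.card Fq))]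
        simp [card_univ]
    _ = ∑ i ∈ Finset.Icc 1 N,
          N.choose i * (Fintype.card F - 1) ^ i * (Fintype.card Fq ^ i - Fintype.card Fq) := by
        rw [← Finset.sum_subset (s₁ := Finset.Icc 1 N) (s₂ := Finset.range (N + 1))
          (by intro x hx; simp only [Finset.mem_Icc] at hx; simp; omega)
          (by
            intro x hx hnx
            simp only [Finset.mem_range] at hx
            simp only [Finset.mem_Icc] at hnx
            have : x = 0 := by omega
            subst this
            have hq1 : 1 ≤ Fintype.card Fq := Fintype.card_pos
            simp
            omega)]
        refine Finset.sum_congr rfl (fun i _ => ?_)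
        rw [smul_eq_mul, mul_assoc]

lemma pigeon {α β : Type*} [Finite α] [Fintype β] (f : α → β) (P : β → Prop)
    (hP : ∀ a, P (f a)) (n : ℕ) (hn : ∀ b, P b → Nat.card {a // f a = b} ≤ n) :
    Nat.card α ≤ n * Nat.card {b // P b} := by
  classical
  have := Fintype.ofFinite α
  rw [Nat.card_eq_fintype_card, Nat.card_eq_fintype_card, Fintype.card_subtype,
    ← Finset.card_univ (α := α)]
  apply Finset.card_le_mul_card_image_of_maps_to (f := f)
  · intro a _; simp [hP a]
  · intro b hb
    simp only [mem_filter, mem_univ, true_and] at hb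
    have h := hn b hb
    rw [Nat.card_eq_fintype_card, Fintype.card_subtype] at h
    simpa using h

lemma li_of_TT {Fq F : Type} [Field Fq] [Field F] [Algebra Fq F] {N : ℕ}
    {c : Fin N → F} {lam : Fin N → Fq}
    (hc0 : c ≠ 0) (hnc : ¬ ∃ l : Fq, ∀ i, c i ≠ 0 → lam i = l) :
    LinearIndependent F ![c, fun i => algebraMap Fq F (lam i) * c i] := by
  obtain ⟨i0, hi0⟩ : ∃ i, c i ≠ 0 := by
    by_contra hcon; push_neg at hcon
    exact hc0 (funext fun i => hcon i)
  obtain ⟨j, hj, hjne⟩ : ∃ j, c j ≠ 0 ∧ lam j ≠ lam i0 := by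
    by_contra hcon; push_neg at hcon
    exact hnc ⟨lam i0, fun i hi => hcon i hi⟩
  rw [LinearIndependent.pair_iff]
  intro s t hst
  have h1 := congrFun hst i0
  have h2 := congrFun hst j
  simp only [Pi.add_apply, Pi.smul_apply, smul_eq_mul, Pi.zero_apply] at h1 h2
  have e1 : s + t * algebraMap Fq F (lam i0) = 0 := by
    have h : (s + t * algebraMap Fq F (lam i0)) * c i0 = 0 := by ring_nf; linear_combination h1
    exact (mul_eq_zero.mp h).resolve_right hi0
  have e2 : s + t * algebraMap Fq F (lam j) = 0 := by
    have h : (s + t * algebraMap Fq F (lam j)) * c j = 0 := by ring_nf; linear_combination h2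
    exact (mul_eq_zero.mp h).resolve_right hj
  by_cases ht : t = 0
  · subst ht
    simp only [zero_mul, add_zero] at e1
    exact ⟨e1, rfl⟩
  · exfalso
    have : algebraMap Fq F (lam i0) = algebraMap Fq F (lam j) := by
      have := e1.trans e2.symm
      have h := add_left_cancel this
      exact (mul_left_cancel₀ ht h)
    exact hjne ((algebraMap Fq F).injective this).symm
/-- Existence of outer minimal codes: if
`binom(N-2,K-2)_{q^h} * Σ_{i=1}^N C(N,i) (q^h-1)^i (q^i-q) < binom(N,K)_{q^h}`, then there
exists a `K`-dimensional code in `F_{q^h}^N` all of whose nonzero codewords are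
`q`-outer minimal. -/
theorem stmt_9 (q h K N : ℕ) (hq : IsPrimePow q) (hh : 1 ≤ h) (hK : 2 ≤ K) (hKN : K ≤ N)
    (Fq FL : Type) [Field Fq] [Field FL] [Algebra Fq FL] [Fintype Fq] [Fintype FL]
    (hcard_q : Fintype.card Fq = q) (hcard_L : Fintype.card FL = q ^ h)
    (hcount : gaussianCount FL (N - 2) (K - 2) *
        (∑ i ∈ Finset.Icc 1 N, N.choose i * (q ^ h - 1) ^ i * (q ^ i - q))
      < gaussianCount FL N K) :
    ∃ C : Submodule FL (Fin N → FL), Module.finrank FL C = K ∧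
      ∀ c ∈ C, c ≠ 0 → ∀ c' ∈ C,
        (∀ i, c' i ≠ 0 → c i ≠ 0) →
        (∀ i, c i ≠ 0 → ∃ l : Fq, c' i = algebraMap Fq FL l * c i) →
        ∃ l : Fq, c' = algebraMap Fq FL l • c := by
  classical
  by_contra hcon
  push_neg at hcon
  haveI : Finite (Submodule FL (Fin N → FL)) :=
    Finite.of_injective (fun (V : Submodule FL (Fin N → FL)) => (V : Set (Fin N → FL)))
      SetLike.coe_injective
  have key : ∀ V : {V : Submodule FL (Fin N → FL) // Module.finrank FL V = K},
      ∃ p : (Fin N → FL) × (Fin N → Fq), TT Fq FL N p.1 p.2 ∧ p.1 ∈ V.1 ∧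
        (fun i => algebraMap Fq FL (p.2 i) * p.1 i) ∈ V.1 := by
    intro V
    obtain ⟨c, hcV, hc0, c', hc'V, hss, hlam, hbad⟩ := hcon V.1 V.2
    set lam : Fin N → Fq := fun i => if hi : c i ≠ 0 then (hlam i hi).choose else 0 with hlamdef
    have hc'eq : c' = fun i => algebraMap Fq FL (lam i) * c i := by
      funext i
      by_cases hi : c i ≠ 0
      · have h1 : lam i = (hlam i hi).choose := dif_pos hi
        rw [h1]
        exact (hlam i hi).choose_spec
      · push_neg at hi
        have h0 : c' i = 0 := by
          by_contra hcc; exact (hss i hcc) hi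
        rw [h0, hi, mul_zero]
    refine ⟨(c, lam), ⟨hc0, ?_, ?_⟩, hcV, ?_⟩
    · intro i hi
      exact dif_neg (fun hne => hne hi)
    · rintro ⟨l, hl⟩
      apply hbad l
      rw [hc'eq]
      funext i
      by_cases hi : c i ≠ 0
      · have hl' : lam i = l := hl i hi
        simp only [Pi.smul_apply, smul_eq_mul]
        rw [hl']
      · push_neg at hi
        simp [hi]
    · rw [← hc'eq]; exact hc'V
  choose Φ hΦT hΦ1 hΦ2 using key
  have fiber : ∀ p : (Fin N → FL) × (Fin N → Fq), TT Fq FL N p.1 p.2 →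
      Nat.card {V : {V : Submodule FL (Fin N → FL) // Module.finrank FL V = K} // Φ V = p}
        ≤ gaussianCount FL (N - 2) (K - 2) := by
    intro p hp
    have hli := li_of_TT hp.1 hp.2.2
    refine le_trans (Nat.card_le_card_of_injective (fun V =>
      (⟨V.1.1, by have h1 := hΦ1 V.1; rw [V.2] at h1; exact h1,
        by have h2 := hΦ2 V.1; rw [V.2] at h2; exact h2, V.1.2⟩ :
        {W : Submodule FL (Fin N → FL) // p.1 ∈ W ∧
          (fun i => algebraMap Fq FL (p.2 i) * p.1 i) ∈ W ∧ Module.finrank FL W = K}))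
      ?_) (count_pair FL p.1 _ hli)
    intro V1 V2 hV
    apply Subtype.ext; apply Subtype.ext
    simpa using hV
  have main := pigeon Φ (fun p => TT Fq FL N p.1 p.2) hΦT
    (gaussianCount FL (N - 2) (K - 2)) fiber
  have hbc := badcount Fq FL N
  rw [hcard_q, hcard_L] at hbc
  exact absurd (le_trans main (Nat.mul_le_mul_left _ hbc)) (not_le.mpr hcount)
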